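/- Let n ≥ 1 be a natural number, l a natural number with gcd(l, n) = 1, j a natural number with j ≤ n − 1, and m ∈ ℂ such that sin(πlp/n + m) ≠ 0 for every natural number p < n and sin(mn) ≠ 0. Then ∑_{p=0}^{n−1} cos((2j+1)(πlp/n + m)) / sin(πlp/n + m) = n · cos(mn)/sin(mn); equivalently, ∑_{p=0}^{n−1} csc(πlp/n + m) · (−cos((2j+1)(πlp/n + m))) = −n · cot(mn). -/

import Mathlib

open Complex Real

private lemma exp_two_sub_one (z : ℂ) :
    Complex.exp (2*z*Complex.I) - 1 = Complex.exp (z*Complex.I) * (2*Complex.I*Complex.sin z) := by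
  have h2 : Complex.exp (2*z*Complex.I) = Complex.exp (z*Complex.I) ^ 2 := by
    rw [show (2:ℂ)*z*Complex.I = ((2:ℕ):ℂ)*(z*Complex.I) by push_cast; ring, Complex.exp_nat_mul]
  have hab : Complex.exp (z*Complex.I) * Complex.exp (-z*Complex.I) = 1 := by
    rw [← Complex.exp_add]; ring_nf; exact Complex.exp_zero
  rw [h2, Complex.sin]
  linear_combination hab + (Complex.exp (z*Complex.I)^2 - Complex.exp (z*Complex.I)*Complex.exp (-z*Complex.I)) * Complex.I_sq

private lemma exp_two_add_one (z : ℂ) :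
    Complex.exp (2*z*Complex.I) + 1 = Complex.exp (z*Complex.I) * (2*Complex.cos z) := by
  have h2 : Complex.exp (2*z*Complex.I) = Complex.exp (z*Complex.I) ^ 2 := by
    rw [show (2:ℂ)*z*Complex.I = ((2:ℕ):ℂ)*(z*Complex.I) by push_cast; ring, Complex.exp_nat_mul]
  have hab : Complex.exp (z*Complex.I) * Complex.exp (-z*Complex.I) = 1 := by
    rw [← Complex.exp_add]; ring_nf; exact Complex.exp_zero
  rw [h2, Complex.cos]
  linear_combination -hab

private lemma term_eq (j : ℕ) (θ : ℂ) (hθ : Complex.sin θ ≠ 0) :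
    (Complex.sin θ)⁻¹ * (-Complex.cos ((2*j+1)*θ)) =
      -Complex.I * ((∑ k ∈ Finset.range (j+1), Complex.exp (2*θ*Complex.I) ^ k)
        - (∑ k ∈ Finset.range j, (Complex.exp (2*θ*Complex.I))⁻¹ ^ (k+1))
        + 2/(Complex.exp (2*θ*Complex.I) - 1)) := by
  set z := Complex.exp (θ*Complex.I) with hz
  have hz0 : z ≠ 0 := Complex.exp_ne_zero _
  have h2z : (z:ℂ)^2 ≠ 0 := pow_ne_zero _ hz0
  have hu : Complex.exp (2*θ*Complex.I) = z^2 := by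
    rw [show (2:ℂ)*θ*Complex.I = ((2:ℕ):ℂ)*(θ*Complex.I) by push_cast; ring, Complex.exp_nat_mul]
  have hz1 : z^2 - 1 ≠ 0 := by
    have := exp_two_sub_one θ
    rw [hu] at this
    rw [this]
    exact mul_ne_zero hz0 (by simp [hθ, Complex.I_ne_zero])
  have h1z : 1 - z^2 ≠ 0 := by intro h; apply hz1; linear_combination -h
  have hsin : Complex.sin θ = (1 - z^2) * Complex.I / (2*z) := by
    rw [Complex.sin, show -θ*Complex.I = -(θ*Complex.I) by ring, Complex.exp_neg, ← hz]
    field_simp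
  have hmul : Complex.sin θ * (-2*z*Complex.I/(1 - z^2)) = 1 := by
    rw [hsin]
    field_simp
    linear_combination -Complex.I_sq
  have hsininv : (Complex.sin θ)⁻¹ = -2*z*Complex.I/(1 - z^2) :=
    inv_eq_of_mul_eq_one_right hmul
  have hN : Complex.exp (((2*j+1:ℕ):ℂ)*(θ*Complex.I)) = z^(2*j+1) := by
    rw [Complex.exp_nat_mul]
  have hcos : Complex.cos ((2*(j:ℂ)+1)*θ) = ((z^(2*j+1))^2 + 1)/(2*z^(2*j+1)) := by
    rw [Complex.cos, show (2*(j:ℂ)+1)*θ*Complex.I = ((2*j+1 : ℕ):ℂ)*(θ*Complex.I) by push_cast; ring,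
      show -((2*(j:ℂ)+1)*θ)*Complex.I = -(((2*j+1 : ℕ):ℂ)*(θ*Complex.I)) by push_cast; ring,
      Complex.exp_neg, hN]
    have hzz : z^(2*j+1) ≠ 0 := pow_ne_zero _ hz0
    field_simp
  have hg1 : ∑ k ∈ Finset.range (j+1), (z^2) ^ k = ((z^2)^(j+1) - 1)/(z^2 - 1) := by
    rw [eq_div_iff hz1, geom_sum_mul]
  have hg2 : ∑ k ∈ Finset.range j, ((z^2)⁻¹) ^ (k+1) =
      (((z^2)^j - 1)/(z^2 - 1)) * ((z^2)^j)⁻¹ := by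
    rw [← Finset.sum_range_reflect (fun k => ((z^2)⁻¹)^(k+1)) j]
    have hT : ∑ k ∈ Finset.range j, (z^2) ^ k = ((z^2)^j - 1)/(z^2 - 1) := by
      rw [eq_div_iff hz1, geom_sum_mul]
    rw [← hT, Finset.sum_mul]
    apply Finset.sum_congr rfl
    intro k hk
    have hk' : k < j := Finset.mem_range.mp hk
    have h1 : j - 1 - k + 1 = j - k := by omega
    simp only [h1]
    have hpow : (z^2)^k * (z^2)^(j-k) = (z^2)^j := by rw [← pow_add]; congr 1; omega
    have hjk : (z^2)^(j-k) ≠ 0 := pow_ne_zero _ h2z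
    have hjj : (z^2)^j ≠ 0 := pow_ne_zero _ h2z
    field_simp
    have hinv : (1/z^2)^(j-k)*(z^2)^(j-k) = 1 := by rw [← mul_pow, one_div, inv_mul_cancel₀ h2z, one_pow]
    linear_combination (-(1/z^2)^(j-k))*hpow + (z^2)^k*hinv
  rw [hu, hg1, hg2, hsininv, hcos]
  have hzz : z^(2*j+1) ≠ 0 := pow_ne_zero _ hz0
  have hzj : (z^2)^j ≠ 0 := pow_ne_zero _ h2z
  field_simp
  ring

theorem watson_harkins_degenerate_case
    (n : ℕ) (hn : 1 ≤ n) (l : ℕ) (hl : Nat.gcd l n = 1)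
    (j : ℕ) (hj : j ≤ n - 1) (m : ℂ)
    (hs : ∀ p : ℕ, p < n → Complex.sin (π * l * p / n + m) ≠ 0)
    (hsn : Complex.sin (m * n) ≠ 0) :
    ∑ p ∈ Finset.range n,
        (Complex.sin (π * l * p / n + m))⁻¹ *
          (-Complex.cos ((2 * j + 1) * (π * l * p / n + m))) =
      -(n * (Complex.cos (m * n) / Complex.sin (m * n))) := by
  have hn0 : (n:ℂ) ≠ 0 := Nat.cast_ne_zero.2 (by omega)
  have hjn : j < n := by omega
  set ζ : ℂ := Complex.exp (2*(π:ℂ)*Complex.I*l/n) with hζdef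
  set w : ℂ := Complex.exp (2*m*Complex.I) with hwdef
  have hπ : (π:ℂ) ≠ 0 := by exact_mod_cast Real.pi_ne_zero
  have hζn : ζ ^ n = 1 := by
    rw [hζdef, ← Complex.exp_nat_mul,
      show (n:ℂ) * (2*(π:ℂ)*Complex.I*l/n) = (l:ℂ)*(2*(π:ℂ)*Complex.I) by field_simp,
      Complex.exp_nat_mul, Complex.exp_two_pi_mul_I, one_pow]
  have hζpow : ∀ k : ℕ, 0 < k → k < n → ζ^k ≠ 1 := by
    intro k hk0 hkn h
    rw [hζdef, ← Complex.exp_nat_mul, Complex.exp_eq_one_iff] at h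
    obtain ⟨t, ht⟩ := h
    have h2 : (k:ℂ) * l = t * n := by
      have h2πI : (2*(π:ℂ)*Complex.I) ≠ 0 := by simp [hπ, Complex.I_ne_zero]
      field_simp at ht
      linear_combination ht
    have h3 : (k*l : ℤ) = t*n := by exact_mod_cast h2
    have h5 : n ∣ k*l := by
      have h4 : (n:ℤ) ∣ (k*l : ℤ) := ⟨t, by linarith⟩
      exact_mod_cast h4
    have h6 : n ∣ k := (Nat.Coprime.dvd_of_dvd_mul_right (Nat.coprime_comm.mp hl)) h5
    have := Nat.le_of_dvd hk0 h6
    omega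
  have hS : ∀ x : ℂ, x^n = 1 → x ≠ 1 → ∑ p ∈ Finset.range n, x^p = 0 := by
    intro x h1 h2; rw [geom_sum_eq h2, h1]; simp
  have hθexp : ∀ p : ℕ, Complex.exp (2*((π:ℂ) * l * p / n + m)*Complex.I) = w * ζ^p := by
    intro p
    rw [hwdef, hζdef, ← Complex.exp_nat_mul, ← Complex.exp_add]
    congr 1
    field_simp
    ring
  have hW : w^n = Complex.exp (2*(m*(n:ℂ))*Complex.I) := by
    rw [hwdef, ← Complex.exp_nat_mul]; congr 1; ring
  have hWm1 : w^n - 1 = Complex.exp ((m*(n:ℂ))*Complex.I) * (2*Complex.I*Complex.sin (m*n)) := by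
    rw [hW]; exact exp_two_sub_one (m*n)
  have hW1 : w^n - 1 ≠ 0 := by
    rw [hWm1]
    exact mul_ne_zero (Complex.exp_ne_zero _) (by simp [hsn, Complex.I_ne_zero])
  have hWp1 : w^n + 1 = Complex.exp ((m*(n:ℂ))*Complex.I) * (2*Complex.cos (m*n)) := by
    rw [hW]; exact exp_two_add_one (m*n)
  have hu1 : ∀ p : ℕ, p < n → w*ζ^p - 1 ≠ 0 := by
    intro p hp
    rw [← hθexp p, exp_two_sub_one]
    exact mul_ne_zero (Complex.exp_ne_zero _) (by simp [hs p hp, Complex.I_ne_zero])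
  have hupow : ∀ p : ℕ, (w*ζ^p)^n = w^n := by
    intro p
    rw [mul_pow, ← pow_mul, mul_comm p n, pow_mul, hζn, one_pow, mul_one]
  have hgeo2 : ∀ p : ℕ, p < n → 2/(w*ζ^p - 1) = 2/(w^n-1) * ∑ k ∈ Finset.range n, (w*ζ^p)^k := by
    intro p hp
    have hne : w*ζ^p ≠ 1 := by
      intro h; exact hu1 p hp (by rw [h]; ring)
    rw [geom_sum_eq hne, hupow p]
    field_simp
  have hswap : ∀ N : ℕ, 0 < N → N ≤ n →
      ∑ p ∈ Finset.range n, ∑ k ∈ Finset.range N, (w*ζ^p)^k = n := by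
    intro N hN0 hNn
    rw [Finset.sum_comm]
    have hinner : ∀ k ∈ Finset.range N, ∑ p ∈ Finset.range n, (w*ζ^p)^k
        = if k = 0 then (n:ℂ) else 0 := by
      intro k hk
      have hkn : k < n := lt_of_lt_of_le (Finset.mem_range.mp hk) hNn
      by_cases h0 : k = 0
      · subst h0; simp
      · simp only [if_neg h0]
        have hterm : ∀ p ∈ Finset.range n, (w*ζ^p)^k = w^k * (ζ^k)^p := by
          intro p _; rw [mul_pow, ← pow_mul, mul_comm p k, pow_mul]
        rw [Finset.sum_congr rfl hterm, ← Finset.mul_sum,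
          hS (ζ^k) (by rw [← pow_mul, mul_comm, pow_mul, hζn, one_pow])
            (hζpow k (Nat.pos_of_ne_zero h0) hkn), mul_zero]
    rw [Finset.sum_congr rfl hinner, Finset.sum_ite_eq' (Finset.range N) 0 (fun _ => (n:ℂ))]
    simp [hN0]
  have hswapInv : ∑ p ∈ Finset.range n, ∑ k ∈ Finset.range j, ((w*ζ^p)⁻¹)^(k+1) = 0 := by
    rw [Finset.sum_comm]
    apply Finset.sum_eq_zero
    intro k hk
    have hk' : k + 1 < n := by have := Finset.mem_range.mp hk; omega
    have hterm : ∀ p ∈ Finset.range n, ((w*ζ^p)⁻¹)^(k+1) = (w⁻¹)^(k+1) * ((ζ⁻¹)^(k+1))^p := by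
      intro p _
      rw [mul_inv, mul_pow, ← inv_pow, ← pow_mul, mul_comm p (k+1), pow_mul]
    have hx1 : ((ζ⁻¹)^(k+1))^n = 1 := by
      rw [← pow_mul, mul_comm, pow_mul, inv_pow, hζn, inv_one, one_pow]
    have hx2 : (ζ⁻¹)^(k+1) ≠ 1 := by
      rw [inv_pow, ne_eq, inv_eq_one]
      exact hζpow (k+1) (by omega) hk'
    rw [Finset.sum_congr rfl hterm, ← Finset.mul_sum, hS _ hx1 hx2, mul_zero]
  have hstep : ∀ p ∈ Finset.range n,
      (Complex.sin ((π:ℂ) * l * p / n + m))⁻¹ *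
          (-Complex.cos ((2 * (j:ℂ) + 1) * ((π:ℂ) * l * p / n + m))) =
      -Complex.I * ((∑ k ∈ Finset.range (j+1), (w*ζ^p)^k)
        - (∑ k ∈ Finset.range j, ((w*ζ^p)⁻¹)^(k+1))
        + 2/(w^n-1) * ∑ k ∈ Finset.range n, (w*ζ^p)^k) := by
    intro p hp
    have hp' := Finset.mem_range.mp hp
    rw [term_eq j _ (hs p hp'), hθexp p, hgeo2 p hp']
  rw [Finset.sum_congr rfl hstep, ← Finset.mul_sum, Finset.sum_add_distrib,
    Finset.sum_sub_distrib, ← Finset.mul_sum,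
    hswap (j+1) (by omega) (by omega), hswapInv, hswap n (by omega) le_rfl, sub_zero]
  have hE : Complex.exp ((m*(n:ℂ))*Complex.I) ≠ 0 := Complex.exp_ne_zero _
  field_simp
  rw [mul_comm (n:ℂ) m]
  field_simp
  linear_combination (-(Complex.I*Complex.sin (m*(n:ℂ))))*hWp1 + (Complex.cos (m*(n:ℂ)))*hWm1
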